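/- Let e₁,…,e_m be vectors in a Hilbert 𝔄-module 𝔛 with ⟨eᵢ,eⱼ⟩ = 0 for i ≠ j and ‖eₖ‖ = 1. Let r_k, ρ_k ∈ ℝ and suppose x₁,…,xₙ ∈ 𝔛 satisfy r_k²‖xⱼ‖ ≥ 0, r_k²‖xⱼ‖·1 ≤ Re⟨r_k e_k, xⱼ⟩ and ρ_k²‖xⱼ‖·1 ≤ Im⟨ρ_k e_k, xⱼ⟩ in the order of 𝔄, for all j, k. Then (∑ₖ (r_k² + ρ_k²))^{1/2} · ∑ⱼ ‖xⱼ‖ ≤ ‖∑ⱼ xⱼ‖. -/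

import Mathlib

open scoped RightActions

/-- Hermitian real part of an element of a complex *-algebra. -/
noncomputable def cre {A : Type*} [Ring A] [StarRing A] [Module ℂ A] (a : A) : A :=
  (2 : ℂ)⁻¹ • (a + star a)

/-- Hermitian imaginary part of an element of a complex *-algebra. -/
noncomputable def cim {A : Type*} [Ring A] [StarRing A] [Module ℂ A] (a : A) : A :=
  (2 * Complex.I)⁻¹ • (a - star a)

/-- The Hilbert C⋆-module class as it stood in Mathlib (Dec 2024): a right `A`-module. -/
class CStarModuleOld (A E : Type*) [NonUnitalSemiring A] [StarRing A]
    [Module ℂ A] [AddCommGroup E] [Module ℂ E] [PartialOrder A] [SMul Aᵐᵒᵖ E] [Norm A] [Norm E]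
    extends Inner A E where
  inner_add_right {x} {y} {z} : inner x (y + z) = inner x y + inner x z
  inner_self_nonneg {x} : 0 ≤ inner x x
  inner_self {x} : inner x x = 0 ↔ x = 0
  inner_op_smul_right {a : A} {x y : E} : inner x (y <• a) = inner x y * a
  inner_smul_right_complex {z : ℂ} {x} {y} : inner x (z • y) = z • inner x y
  star_inner x y : star (inner x y) = inner y x
  norm_eq_sqrt_norm_inner_self x : ‖x‖ = Real.sqrt ‖inner x x‖

section aux

variable {A : Type*} [Ring A] [StarRing A] [Module ℂ A] [StarModule ℂ A]

lemma cre_sum {ι : Type*} (s : Finset ι) (f : ι → A) :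
    cre (∑ i ∈ s, f i) = ∑ i ∈ s, cre (f i) := by
  simp [cre, ← Finset.sum_add_distrib, Finset.smul_sum]

lemma cre_key (r ρ : ℝ) (a : A) :
    cre (((r : ℂ) - (ρ : ℂ) * Complex.I) • a) = cre ((r : ℂ) • a) + cim ((ρ : ℂ) • a) := by
  simp only [cre, cim, star_smul, smul_add, smul_sub, smul_smul]
  rw [star_sub, star_mul']
  simp only [Complex.star_def, Complex.conj_ofReal, Complex.conj_I]
  match_scalars <;> field_simp <;>
    first
      | rfl
      | linear_combination (4*(ρ:ℂ))*Complex.I_sq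
      | linear_combination (-4*(ρ:ℂ))*Complex.I_sq
      | linear_combination ((ρ:ℂ))*Complex.I_sq
      | linear_combination (-(ρ:ℂ))*Complex.I_sq

end aux

namespace CStarModuleOld

variable {A E : Type*} [CStarAlgebra A] [PartialOrder A] [StarOrderedRing A]
  [AddCommGroup E] [Module ℂ E] [SMul Aᵐᵒᵖ E] [Norm E] [CStarModuleOld A E]

lemma inner_add_left' {x y z : E} : inner A (x + y) z = inner A x z + inner A y z := by
  rw [← star_inner (A := A) z (x + y), inner_add_right (A := A), star_add, star_inner, star_inner]

lemma inner_smul_left_complex {z : ℂ} {x y : E} : inner A (z • x) y = star z • inner A x y := by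
  rw [← star_inner (A := A) y (z • x), inner_smul_right_complex (A := A), star_smul, star_inner]

lemma inner_op_smul_left' {a : A} {x y : E} : inner A (x <• a) y = star a * inner A x y := by
  rw [← star_inner (A := A) y (x <• a), inner_op_smul_right (A := A), star_mul, star_inner]

lemma inner_smul_left_real {r : ℝ} {x y : E} : inner A (r • x) y = r • inner A x y := by
  rw [← Complex.coe_smul, inner_smul_left_complex, Complex.star_def, Complex.conj_ofReal,
    Complex.coe_smul]

lemma inner_smul_right_real {r : ℝ} {x y : E} : inner A x (r • y) = r • inner A x y := by
  rw [← Complex.coe_smul, inner_smul_right_complex (A := A), Complex.coe_smul]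

lemma inner_zero_right' {x : E} : inner A x 0 = 0 := by
  simpa using inner_smul_right_complex (A := A) (z := 0) (x := x) (y := 0)

lemma inner_zero_left' {x : E} : inner A 0 x = 0 := by
  rw [← star_inner (A := A) x 0, inner_zero_right', star_zero]

lemma inner_sub_right' {x y z : E} : inner A x (y - z) = inner A x y - inner A x z := by
  rw [eq_sub_iff_add_eq, ← inner_add_right (A := A), sub_add_cancel]

lemma inner_sub_left' {x y z : E} : inner A (x - y) z = inner A x z - inner A y z := by
  rw [eq_sub_iff_add_eq, ← inner_add_left', sub_add_cancel]

lemma inner_sum_right {ι : Type*} {s : Finset ι} {x : E} {y : ι → E} :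
    inner A x (∑ i ∈ s, y i) = ∑ i ∈ s, inner A x (y i) :=
  map_sum (AddMonoidHom.mk' (fun y => inner A x y) fun _ _ => inner_add_right (A := A)) y s

lemma inner_sum_left {ι : Type*} {s : Finset ι} {x : ι → E} {y : E} :
    inner A (∑ i ∈ s, x i) y = ∑ i ∈ s, inner A (x i) y :=
  map_sum (AddMonoidHom.mk' (fun x => inner A x y) fun _ _ => inner_add_left') x s

protected lemma norm_nonneg {A : Type*} [CStarAlgebra A] [PartialOrder A] [SMul Aᵐᵒᵖ E] [CStarModuleOld A E] {x : E} : 0 ≤ ‖x‖ := by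
  rw [norm_eq_sqrt_norm_inner_self (A := A) x]; exact Real.sqrt_nonneg _

lemma norm_sq_eq {x : E} : ‖x‖ ^ 2 = ‖inner A x x‖ := by
  rw [norm_eq_sqrt_norm_inner_self (A := A) x, Real.sq_sqrt (norm_nonneg _)]

protected lemma norm_zero' {A : Type*} [CStarAlgebra A] [PartialOrder A] [SMul Aᵐᵒᵖ E] [CStarModuleOld A E] : ‖(0 : E)‖ = 0 := by
  rw [norm_eq_sqrt_norm_inner_self (A := A), (inner_self (A := A)).mpr rfl]; simp

protected lemma norm_pos {A : Type*} [CStarAlgebra A] [PartialOrder A] [SMul Aᵐᵒᵖ E] [CStarModuleOld A E] {x : E} (hx : x ≠ 0) : 0 < ‖x‖ := by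
  rw [norm_eq_sqrt_norm_inner_self (A := A) x, Real.sqrt_pos, norm_pos_iff]
  intro H
  exact hx ((inner_self (A := A)).mp H)

lemma inner_swap_mul_inner_le {x y : E} :
    inner A y x * inner A x y ≤ ‖x‖ ^ 2 • inner A y y := by
  rcases eq_or_ne x 0 with h | h
  · subst h; simp [inner_zero_left', inner_zero_right', CStarModuleOld.norm_zero' (A := A)]
  have hpos : 0 < ‖x‖ ^ 2 := pow_pos (CStarModuleOld.norm_pos (A := A) h) 2
  set t : ℝ := ‖x‖ ^ 2 with ht
  set a : A := inner A x y with ha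
  have hsa : star a = inner A y x := star_inner (A := A) x y
  have h0 : (0 : A) ≤ inner A (x <• a - t • y) (x <• a - t • y) := inner_self_nonneg (A := A)
  rw [inner_sub_left', inner_sub_right', inner_sub_right', inner_op_smul_left',
    inner_op_smul_left', inner_op_smul_right (A := A), inner_smul_left_real,
    inner_smul_left_real, inner_smul_right_real, inner_smul_right_real,
    inner_op_smul_right (A := A), ← ha, ← hsa, mul_smul_comm, ← mul_assoc] at h0
  have hP : star a * inner A x x * a ≤ t • (star a * a) := by
    have := CStarAlgebra.star_left_conjugate_le_norm_smul (a := a) (b := inner A x x)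
      (star_inner (A := A) x x)
    rwa [← norm_sq_eq (A := A)] at this
  have h3 : star a * inner A x x * a - t • (star a * a) - (t • (star a * a) - t • t • inner A y y)
      ≤ t • (star a * a) - t • (star a * a) - (t • (star a * a) - t • t • inner A y y) := by
    gcongr
  have h4 := h0.trans h3
  rw [sub_self, zero_sub, neg_sub, sub_nonneg] at h4
  rw [← hsa]
  exact (smul_le_smul_iff_of_pos_left hpos).mp h4

variable (E) in
lemma norm_inner_le {x y : E} : ‖inner A x y‖ ≤ ‖x‖ * ‖y‖ := by
  have := calc ‖inner A x y‖ ^ 2 = ‖star (inner A x y) * inner A x y‖ := by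
                rw [CStarRing.norm_star_mul_self, pow_two]
    _ ≤ ‖‖x‖ ^ 2 • inner A y y‖ := by
                refine CStarAlgebra.norm_le_norm_of_nonneg_of_le (star_mul_self_nonneg _) ?_
                rw [star_inner (A := A)]
                exact inner_swap_mul_inner_le
    _ = ‖x‖ ^ 2 * ‖inner A y y‖ := by
                rw [norm_smul, Real.norm_of_nonneg (by positivity)]
    _ = (‖x‖ * ‖y‖) ^ 2 := by rw [← norm_sq_eq (A := A), mul_pow]
  refine (pow_le_pow_iff_left₀ (norm_nonneg _) ?_ (by simp)).mp this
  exact mul_nonneg (CStarModuleOld.norm_nonneg (A := A)) (CStarModuleOld.norm_nonneg (A := A))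

end CStarModuleOld

lemma norm_cre_le {A : Type*} [CStarAlgebra A] (a : A) : ‖cre a‖ ≤ ‖a‖ := by
  calc ‖cre a‖ = 2⁻¹ * ‖a + star a‖ := by rw [cre, norm_smul]; norm_num
    _ ≤ 2⁻¹ * (‖a‖ + ‖star a‖) := by gcongr; exact norm_add_le _ _
    _ = ‖a‖ := by rw [norm_star]; ring

theorem stmt5 {A E : Type*} [CStarAlgebra A] [PartialOrder A] [StarOrderedRing A]
    [AddCommGroup E] [Module ℂ E] [SMul Aᵐᵒᵖ E] [Norm E] [CStarModuleOld A E]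
    (m n : ℕ) (e : Fin m → E) (x : Fin n → E)
    (horth : ∀ i j, i ≠ j → (inner A (e i) (e j) : A) = 0) (hnorm : ∀ k, ‖e k‖ = 1)
    (r ρ : Fin m → ℝ)
    (hpos : ∀ j k, (0 : ℝ) ≤ r k ^ 2 * ‖x j‖)
    (h₁ : ∀ j k, (r k ^ 2 * ‖x j‖) • (1 : A) ≤ cre (inner A ((r k : ℂ) • e k) (x j) : A))
    (h₂ : ∀ j k, (ρ k ^ 2 * ‖x j‖) • (1 : A) ≤ cim (inner A ((ρ k : ℂ) • e k) (x j) : A)) :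
    Real.sqrt (∑ k, (r k ^ 2 + ρ k ^ 2)) * ∑ j, ‖x j‖ ≤ ‖∑ j, x j‖ := by
  set c2 : ℝ := ∑ k, (r k ^ 2 + ρ k ^ 2) with hc2
  set t : ℝ := ∑ j, ‖x j‖ with ht
  set S : E := ∑ j, x j with hS
  set c : Fin m → ℂ := fun k => (r k : ℂ) + (ρ k : ℂ) * Complex.I with hc
  set v : E := ∑ k, c k • e k with hv
  have hc2nn : 0 ≤ c2 := by positivity
  by_cases htriv : (1 : A) = 0
  · have hsub : Subsingleton A := subsingleton_of_zero_eq_one htriv.symm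
    have hz : ∀ y : E, ‖y‖ = 0 := fun y => by
      rw [CStarModuleOld.norm_eq_sqrt_norm_inner_self (A := A)]
      rw [Subsingleton.elim (inner A y y : A) 0]
      simp
    have ht0 : t = 0 := by rw [ht]; exact Finset.sum_eq_zero fun j _ => hz _
    rw [ht0, hz S, mul_zero]
  haveI : Nontrivial A := nontrivial_of_ne 1 0 htriv
  have htnn : 0 ≤ t := Finset.sum_nonneg fun j _ => CStarModuleOld.norm_nonneg (A := A)
  have hSnn : (0:ℝ) ≤ ‖S‖ := CStarModuleOld.norm_nonneg (A := A)
  -- Step A: the key positivity inequality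
  have keyA : (c2 * t) • (1 : A) ≤ cre (inner A v S : A) := by
    have hvS : (inner A v S : A) = ∑ k, ∑ j, (inner A (c k • e k) (x j) : A) := by
      rw [hv, hS, CStarModuleOld.inner_sum_left]
      exact Finset.sum_congr rfl fun k _ => CStarModuleOld.inner_sum_right
    rw [hvS, cre_sum]
    have h2 : ∀ k : Fin m, cre (∑ j, (inner A (c k • e k) (x j) : A)) =
        ∑ j, cre ((inner A (c k • e k) (x j) : A)) := fun k => cre_sum _ _
    calc (c2 * t) • (1 : A)
        = ∑ k, ∑ j, ((r k ^ 2 + ρ k ^ 2) * ‖x j‖) • (1 : A) := by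
          rw [hc2, ht, Finset.sum_mul_sum]
          simp [Finset.sum_smul]
      _ ≤ ∑ k, cre (∑ j, (inner A (c k • e k) (x j) : A)) := by
          refine Finset.sum_le_sum fun k _ => ?_
          rw [h2 k]
          refine Finset.sum_le_sum fun j _ => ?_
          have hsc : (inner A (c k • e k) (x j) : A)
              = ((r k : ℂ) - (ρ k : ℂ) * Complex.I) • (inner A (e k) (x j) : A) := by
            rw [CStarModuleOld.inner_smul_left_complex, hc]
            simp [Complex.star_def, map_add, Complex.conj_ofReal, sub_eq_add_neg]
          rw [hsc, cre_key]
          have e1 := h₁ j k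
          have e2 := h₂ j k
          rw [CStarModuleOld.inner_smul_left_complex] at e1 e2
          simp only [Complex.star_def, Complex.conj_ofReal] at e1 e2
          calc ((r k ^ 2 + ρ k ^ 2) * ‖x j‖) • (1 : A)
              = (r k ^ 2 * ‖x j‖) • (1 : A) + (ρ k ^ 2 * ‖x j‖) • (1 : A) := by
                rw [← add_smul]; ring_nf
            _ ≤ _ := add_le_add e1 e2
  -- Step B: pass to norms
  have hB : c2 * t ≤ ‖v‖ * ‖S‖ := by
    have h1 : c2 * t ≤ ‖cre (inner A v S : A)‖ := by
      have := CStarAlgebra.norm_le_norm_of_nonneg_of_le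
        (a := (c2 * t) • (1 : A)) (b := cre (inner A v S : A))
        (smul_nonneg (mul_nonneg hc2nn htnn) zero_le_one) keyA
      rwa [norm_smul, norm_one, mul_one, Real.norm_of_nonneg (mul_nonneg hc2nn htnn)] at this
    calc c2 * t ≤ ‖cre (inner A v S : A)‖ := h1
      _ ≤ ‖(inner A v S : A)‖ := norm_cre_le _
      _ ≤ ‖v‖ * ‖S‖ := CStarModuleOld.norm_inner_le E
  -- Step C: ‖v‖ ≤ √c2
  have hCc : ∀ k, ‖c k‖ ^ 2 = r k ^ 2 + ρ k ^ 2 := by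
    intro k
    rw [hc]
    simp only [Complex.sq_norm]
    exact Complex.normSq_add_mul_I _ _
  have hvv : (inner A v v : A) = ∑ k, (star (c k) * c k) • (inner A (e k) (e k) : A) := by
    rw [hv, CStarModuleOld.inner_sum_left]
    refine Finset.sum_congr rfl fun k _ => ?_
    rw [CStarModuleOld.inner_sum_right]
    rw [Finset.sum_eq_single k]
    · rw [CStarModuleOld.inner_smul_left_complex, CStarModuleOld.inner_smul_right_complex,
        smul_smul]
    · intro l _ hlk
      rw [CStarModuleOld.inner_smul_left_complex, CStarModuleOld.inner_smul_right_complex,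
        horth k l (Ne.symm hlk)]
      simp
    · intro h; exact absurd (Finset.mem_univ k) h
  have hvnorm : ‖v‖ ≤ Real.sqrt c2 := by
    have hsq : ‖v‖ ^ 2 ≤ c2 := by
      rw [CStarModuleOld.norm_sq_eq (A := A), hvv]
      calc ‖∑ k, (star (c k) * c k) • (inner A (e k) (e k) : A)‖
          ≤ ∑ k, ‖(star (c k) * c k) • (inner A (e k) (e k) : A)‖ :=
            norm_sum_le _ _
        _ ≤ c2 := by
            rw [hc2]
            refine Finset.sum_le_sum fun k _ => ?_
            rw [norm_smul]
            have h1 : ‖(inner A (e k) (e k) : A)‖ = 1 := by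
              have := CStarModuleOld.norm_sq_eq (A := A) (x := e k)
              rw [hnorm k] at this; simpa using this.symm
            rw [h1, mul_one, norm_mul, norm_star, ← sq, hCc k]
    nlinarith [CStarModuleOld.norm_nonneg (A := A) (x := v), Real.sq_sqrt hc2nn,
      Real.sqrt_nonneg c2]
  -- Step D: conclude
  have hfinal : c2 * t ≤ Real.sqrt c2 * ‖S‖ :=
    hB.trans (mul_le_mul_of_nonneg_right hvnorm hSnn)
  rcases eq_or_lt_of_le (Real.sqrt_nonneg c2) with h0 | h0
  · rw [← h0, zero_mul]; exact hSnn
  · have : Real.sqrt c2 * (Real.sqrt c2 * t) ≤ Real.sqrt c2 * ‖S‖ := by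
      rw [← mul_assoc, Real.mul_self_sqrt hc2nn]; exact hfinal
    exact le_of_mul_le_mul_left this h0
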